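/- arXiv:1402.3278 — 3 statements merged into one kernel-verified Lean document; each statement's English description precedes it below -/
import Mathlib

section
/- Let (Ω, F, P) be a probability space, G a sub-σ-algebra of F, D ∈ F, and η an integrable random variable. Let Ĝ be the σ-algebra of all A ∈ F such that there exists B ∈ G with A ∩ D = B ∩ D (restricted to a partition element; assume Ĝ is indeed a σ-algebra containing G and D). Then almost surely, 1_D · E[η 1_D | Ĝ] = 1_D · E[η 1_D | G] / P(D | G), where the right-hand side is interpreted as 0 on {P(D|G)=0}. -/
open MeasureTheory

theorem stmt2_aux {Ω : Type*} (G Ghat : MeasurableSpace Ω) {F : MeasurableSpace Ω}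
    (P : Measure Ω) [IsProbabilityMeasure P] (hG : G ≤ F) (hGhat : Ghat ≤ F)
    (D : Set Ω) (hD : MeasurableSet[F] D)
    (hGhat_spec : ∀ A : Set Ω, MeasurableSet[Ghat] A ↔
      (MeasurableSet[F] A ∧ ∃ B : Set Ω, MeasurableSet[G] B ∧ A ∩ D = B ∩ D))
    (η : Ω → ℝ) (hη : Integrable η P) :
    (fun ω => D.indicator (fun _ => (1 : ℝ)) ω * (P[D.indicator η | Ghat]) ω)
      =ᵐ[P] fun ω => D.indicator (fun _ => (1 : ℝ)) ω *
        ((P[D.indicator η | G]) ω / (P[D.indicator (fun _ => (1 : ℝ)) | G]) ω) := by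
  classical
  set ρ : Ω → ℝ := P[D.indicator (fun _ => (1 : ℝ)) | G] with hρ_def
  set ξ : Ω → ℝ := P[D.indicator η | G] with hξ_def
  set φ : Ω → ℝ := P[D.indicator η | Ghat] with hφ_def
  have hG_le : G ≤ Ghat := fun s hs => (hGhat_spec s).2 ⟨hG s hs, s, hs, rfl⟩
  have hD_Ghat : MeasurableSet[Ghat] D :=
    (hGhat_spec D).2 ⟨hD, Set.univ, MeasurableSet.univ, by simp⟩
  -- integrable basic functions
  have hint1 : Integrable (D.indicator η) P := hη.indicator hD
  have hint_ind : Integrable (D.indicator (fun _ => (1 : ℝ))) P :=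
    (integrable_const (1 : ℝ)).indicator hD
  -- bounds on ρ
  have hρ0 : 0 ≤ᵐ[P] ρ := by
    refine condExp_nonneg ?_
    refine Filter.Eventually.of_forall fun ω => ?_
    by_cases hω : ω ∈ D <;> simp [Set.indicator_apply, hω]
  have hρ1 : ρ ≤ᵐ[P] fun _ => (1 : ℝ) := by
    have h1 : P[(fun _ => (1 : ℝ)) | G] = fun _ => (1 : ℝ) := by
      simpa using condExp_const hG (1 : ℝ) (μ := P)
    have := condExp_mono (μ := P) (m := G) hint_ind (integrable_const (1 : ℝ))
      (Filter.Eventually.of_forall fun ω => by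
        by_cases hω : ω ∈ D <;> simp [Set.indicator_apply, hω])
    rw [h1] at this
    exact this
  -- indicator bounds
  have hind_le : ∀ ω, |D.indicator (fun _ => (1 : ℝ)) ω| ≤ 1 := by
    intro ω; by_cases hω : ω ∈ D <;> simp [Set.indicator_apply, hω]
  -- measurabilities
  have sm_ind : StronglyMeasurable[Ghat] (D.indicator (fun _ => (1 : ℝ))) :=
    stronglyMeasurable_const.indicator hD_Ghat
  have sm_ρ : StronglyMeasurable[Ghat] ρ := stronglyMeasurable_condExp.mono hG_le
  have sm_ξ : StronglyMeasurable[Ghat] ξ := stronglyMeasurable_condExp.mono hG_le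
  have sm_φ : StronglyMeasurable[Ghat] φ := stronglyMeasurable_condExp
  -- positivity of ρ on D (a.e.)
  have hpos : ∀ᵐ ω ∂P, ω ∈ D → 0 < ρ ω := by
    set S : Set Ω := {ω | ρ ω ≤ 0} with hS_def
    have hS : MeasurableSet[G] S := by
      have : S = ρ ⁻¹' Set.Iic 0 := rfl
      rw [this]
      exact (stronglyMeasurable_condExp (m := G)).measurable measurableSet_Iic
    have h1 : ∫ x in S, D.indicator (fun _ => (1 : ℝ)) x ∂P = ∫ x in S, ρ x ∂P :=
      (setIntegral_condExp hG hint_ind hS).symm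
    have h2 : ∫ x in S, D.indicator (fun _ => (1 : ℝ)) x ∂P = (P (S ∩ D)).toReal := by
      rw [setIntegral_indicator hD]
      simp
      rfl
    have h3 : ∫ x in S, ρ x ∂P ≤ 0 := by
      refine integral_nonpos_of_ae ?_
      refine (ae_restrict_iff' (hG S hS)).2 ?_
      exact Filter.Eventually.of_forall fun ω hω => hω
    have h4 : P (S ∩ D) = 0 := by
      have : (P (S ∩ D)).toReal ≤ 0 := by rw [h2] at h1; linarith [h1, h3]
      have h5 : (P (S ∩ D)).toReal = 0 := le_antisymm this ENNReal.toReal_nonneg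
      exact (ENNReal.toReal_eq_zero_iff _).1 h5 |>.resolve_right (fun h => (measure_ne_top P _) h)
    have := measure_eq_zero_iff_ae_notMem.1 h4
    filter_upwards [this] with ω hω hωD
    by_contra hle
    exact hω ⟨le_of_not_gt hle, hωD⟩
  -- integrable products
  have hint_prod1 : Integrable ((fun ω => D.indicator (fun _ => (1 : ℝ)) ω * ρ ω) *
      D.indicator η) P := by
    refine Integrable.mono' hη.abs ?_ ?_
    · exact ((sm_ind.mono hGhat).mul (sm_ρ.mono hGhat)).aestronglyMeasurable.mul
        (hη.1.indicator hD)
    · filter_upwards [hρ0, hρ1] with ω h0 h1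
      simp only [Pi.mul_apply, Real.norm_eq_abs, abs_mul]
      have hρa : |ρ ω| ≤ 1 := by rw [abs_of_nonneg h0]; exact h1
      have hind : |D.indicator η ω| ≤ |η ω| := by
        by_cases hω : ω ∈ D <;> simp [Set.indicator_apply, hω, abs_nonneg]
      calc |D.indicator (fun _ => (1:ℝ)) ω| * |ρ ω| * |D.indicator η ω|
          ≤ 1 * 1 * |η ω| := by
            gcongr <;> first | exact hind_le ω | exact hρa | exact hind
        _ = |η ω| := by ring
  have hint_prod2 : Integrable (ρ * D.indicator η) P := by
    refine Integrable.mono' hη.abs ?_ ?_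
    · exact (sm_ρ.mono hGhat).aestronglyMeasurable.mul (hη.1.indicator hD)
    · filter_upwards [hρ0, hρ1] with ω h0 h1
      simp only [Pi.mul_apply, Real.norm_eq_abs, abs_mul]
      have hρa : |ρ ω| ≤ 1 := by rw [abs_of_nonneg h0]; exact h1
      have hind : |D.indicator η ω| ≤ |η ω| := by
        by_cases hω : ω ∈ D <;> simp [Set.indicator_apply, hω, abs_nonneg]
      calc |ρ ω| * |D.indicator η ω| ≤ 1 * |η ω| := by gcongr
        _ = |η ω| := by ring
  have hint_prod3 : Integrable (ξ * D.indicator (fun _ => (1 : ℝ))) P := by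
    refine Integrable.mono' (integrable_condExp (f := D.indicator η) (m := G)).abs ?_ ?_
    · exact ((sm_ξ.mono hGhat).mul (stronglyMeasurable_const.indicator hD)).aestronglyMeasurable
    · exact Filter.Eventually.of_forall fun ω => by
        simp only [Pi.mul_apply, Real.norm_eq_abs, abs_mul]
        calc |ξ ω| * |D.indicator (fun _ => (1:ℝ)) ω| ≤ |ξ ω| * 1 := by
              gcongr; exact hind_le ω
          _ = |ξ ω| := by ring
  -- pull-out properties
  have pull1 : P[(fun ω => D.indicator (fun _ => (1 : ℝ)) ω * ρ ω) * D.indicator η | Ghat]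
      =ᵐ[P] (fun ω => D.indicator (fun _ => (1 : ℝ)) ω * ρ ω) * φ :=
    condExp_mul_of_stronglyMeasurable_left (sm_ind.mul sm_ρ) hint_prod1 hint1
  have pull2 : P[ρ * D.indicator η | G] =ᵐ[P] ρ * ξ :=
    condExp_mul_of_stronglyMeasurable_left stronglyMeasurable_condExp hint_prod2 hint1
  have pull3 : P[ξ * D.indicator (fun _ => (1 : ℝ)) | G] =ᵐ[P] ξ * ρ :=
    condExp_mul_of_stronglyMeasurable_left stronglyMeasurable_condExp hint_prod3 hint_ind
  -- integrability of the two sides of claim B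
  have hintL : Integrable (fun ω => D.indicator (fun _ => (1 : ℝ)) ω * ρ ω * φ ω) P := by
    refine Integrable.mono'
      (integrable_condExp (f := D.indicator η) (m := Ghat)).abs ?_ ?_
    · exact ((sm_ind.mono hGhat).mul (sm_ρ.mono hGhat)).mul
        (sm_φ.mono hGhat) |>.aestronglyMeasurable
    · filter_upwards [hρ0, hρ1] with ω h0 h1
      simp only [Real.norm_eq_abs, abs_mul]
      have hρa : |ρ ω| ≤ 1 := by rw [abs_of_nonneg h0]; exact h1
      calc |D.indicator (fun _ => (1:ℝ)) ω| * |ρ ω| * |φ ω| ≤ 1 * 1 * |φ ω| := by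
            gcongr <;> first | exact hind_le ω | exact hρa
        _ = |φ ω| := by ring
  have hintR : Integrable (fun ω => D.indicator (fun _ => (1 : ℝ)) ω * ξ ω) P := by
    refine Integrable.mono'
      (integrable_condExp (f := D.indicator η) (m := G)).abs ?_ ?_
    · exact ((sm_ind.mono hGhat).mul (sm_ξ.mono hGhat)).aestronglyMeasurable
    · refine Filter.Eventually.of_forall fun ω => ?_
      simp only [Real.norm_eq_abs, abs_mul]
      calc |D.indicator (fun _ => (1:ℝ)) ω| * |ξ ω| ≤ 1 * |ξ ω| := by
            gcongr; exact hind_le ω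
        _ = |ξ ω| := by ring
  -- claim B
  have hB : (fun ω => D.indicator (fun _ => (1 : ℝ)) ω * ρ ω * φ ω)
      =ᵐ[P] (fun ω => D.indicator (fun _ => (1 : ℝ)) ω * ξ ω) := by
    refine ae_eq_of_forall_setIntegral_eq_of_sigmaFinite' hGhat
      (fun s _ _ => hintL.integrableOn) (fun s _ _ => hintR.integrableOn)
      (fun A hA _ => ?_) ((sm_ind.mul sm_ρ).mul sm_φ).aestronglyMeasurable
      (sm_ind.mul sm_ξ).aestronglyMeasurable
    obtain ⟨hAF, B, hBmeas, hABD⟩ := (hGhat_spec A).1 hA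
    -- left side
    have hL : ∫ x in A, D.indicator (fun _ => (1 : ℝ)) x * ρ x * φ x ∂P
        = ∫ x in B, ρ x * ξ x ∂P := by
      have e1 : ∫ x in A, D.indicator (fun _ => (1 : ℝ)) x * ρ x * φ x ∂P
          = ∫ x in A, ((fun ω => D.indicator (fun _ => (1 : ℝ)) ω * ρ ω) * φ) x ∂P := by
        rfl
      have e2 : ∫ x in A, ((fun ω => D.indicator (fun _ => (1 : ℝ)) ω * ρ ω) * φ) x ∂P
          = ∫ x in A, ((fun ω => D.indicator (fun _ => (1 : ℝ)) ω * ρ ω) * D.indicator η) x ∂P := by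
        rw [← setIntegral_condExp hGhat hint_prod1 hA]
        exact integral_congr_ae (ae_restrict_of_ae pull1.symm)
      have e3 : ∫ x in A, ((fun ω => D.indicator (fun _ => (1 : ℝ)) ω * ρ ω) * D.indicator η) x ∂P
          = ∫ x in A, D.indicator (fun ω => ρ ω * η ω) x ∂P := by
        refine integral_congr_ae (Filter.Eventually.of_forall fun ω => ?_)
        by_cases hω : ω ∈ D <;> simp [Set.indicator_apply, hω]
      have e4 : ∫ x in A, D.indicator (fun ω => ρ ω * η ω) x ∂P
          = ∫ x in B, D.indicator (fun ω => ρ ω * η ω) x ∂P := by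
        rw [setIntegral_indicator hD, setIntegral_indicator hD, hABD]
      have e5 : ∫ x in B, D.indicator (fun ω => ρ ω * η ω) x ∂P
          = ∫ x in B, (ρ * D.indicator η) x ∂P := by
        refine integral_congr_ae (Filter.Eventually.of_forall fun ω => ?_)
        by_cases hω : ω ∈ D <;> simp [Set.indicator_apply, hω]
      have e6 : ∫ x in B, (ρ * D.indicator η) x ∂P = ∫ x in B, (ρ * ξ) x ∂P := by
        rw [← setIntegral_condExp hG hint_prod2 hBmeas]
        exact integral_congr_ae (ae_restrict_of_ae pull2)
      rw [e1, e2, e3, e4, e5, e6]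
      rfl
    -- right side
    have hR : ∫ x in A, D.indicator (fun _ => (1 : ℝ)) x * ξ x ∂P
        = ∫ x in B, ρ x * ξ x ∂P := by
      have e1 : ∫ x in A, D.indicator (fun _ => (1 : ℝ)) x * ξ x ∂P
          = ∫ x in A, D.indicator ξ x ∂P := by
        refine integral_congr_ae (Filter.Eventually.of_forall fun ω => ?_)
        by_cases hω : ω ∈ D <;> simp [Set.indicator_apply, hω]
      have e2 : ∫ x in A, D.indicator ξ x ∂P = ∫ x in B, D.indicator ξ x ∂P := by
        rw [setIntegral_indicator hD, setIntegral_indicator hD, hABD]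
      have e3 : ∫ x in B, D.indicator ξ x ∂P
          = ∫ x in B, (ξ * D.indicator (fun _ => (1 : ℝ))) x ∂P := by
        refine integral_congr_ae (Filter.Eventually.of_forall fun ω => ?_)
        by_cases hω : ω ∈ D <;> simp [Set.indicator_apply, hω]
      have e4 : ∫ x in B, (ξ * D.indicator (fun _ => (1 : ℝ))) x ∂P
          = ∫ x in B, (ξ * ρ) x ∂P := by
        rw [← setIntegral_condExp hG hint_prod3 hBmeas]
        exact integral_congr_ae (ae_restrict_of_ae pull3)
      have e5 : ∫ x in B, (ξ * ρ) x ∂P = ∫ x in B, ρ x * ξ x ∂P := by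
        refine integral_congr_ae (Filter.Eventually.of_forall fun ω => ?_)
        simp [mul_comm]
      rw [e1, e2, e3, e4, e5]
    rw [hL, hR]
  -- conclude
  filter_upwards [hB, hpos] with ω hBω hposω
  by_cases hω : ω ∈ D
  · have hρpos := hposω hω
    simp only [Set.indicator_of_mem hω, one_mul] at hBω ⊢
    rw [← hBω, mul_div_cancel_left₀ _ (ne_of_gt hρpos)]
  · simp [Set.indicator_of_notMem hω]

theorem stmt2 {Ω : Type*} {F : MeasurableSpace Ω} (P : Measure Ω) [IsProbabilityMeasure P]
    (G Ghat : MeasurableSpace Ω) (hG : G ≤ F) (hGhat : Ghat ≤ F)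
    (D : Set Ω) (hD : MeasurableSet[F] D)
    (hGhat_spec : ∀ A : Set Ω, MeasurableSet[Ghat] A ↔
      (MeasurableSet[F] A ∧ ∃ B : Set Ω, MeasurableSet[G] B ∧ A ∩ D = B ∩ D))
    (η : Ω → ℝ) (hη : Integrable η P) :
    (fun ω => D.indicator (fun _ => (1 : ℝ)) ω * (P[D.indicator η | Ghat]) ω)
      =ᵐ[P] fun ω => D.indicator (fun _ => (1 : ℝ)) ω *
        ((P[D.indicator η | G]) ω / (P[D.indicator (fun _ => (1 : ℝ)) | G]) ω) :=
  stmt2_aux G Ghat P hG hGhat D hD hGhat_spec η hη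
end

section
/- With the notation of the direct-sum filtration F̂_t = {A ∈ F : ∀ i, ∃ A^i ∈ F^i_t, A ∩ D_i = A^i ∩ D_i}, if each filtration F^i is right-continuous (F^i_t = ∩_{s>t} F^i_s for all t), then F̂ is right-continuous: ∩_{s>t} F̂_s = F̂_t for every t ≥ 0. -/
open MeasureTheory
open scoped NNReal

/-- Membership in the direct-sum family `F̂_t`. -/
def dirSumMem {Ω : Type*} {k : ℕ} (F : MeasurableSpace Ω)
    (Fi : Fin k → ℝ≥0 → MeasurableSpace Ω) (D : Fin k → Set Ω)
    (t : ℝ≥0) (A : Set Ω) : Prop :=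
  MeasurableSet[F] A ∧
    ∀ i, ∃ Ai : Set Ω, MeasurableSet[Fi i t] Ai ∧ A ∩ D i = Ai ∩ D i

theorem stmt4 {Ω : Type*} {k : ℕ} (F : MeasurableSpace Ω)
    (Fi : Fin k → ℝ≥0 → MeasurableSpace Ω) (D : Fin k → Set Ω)
    (hDmeas : ∀ i, MeasurableSet[F] (D i))
    (hDdisj : Pairwise (Function.onFun Disjoint D))
    (hDcover : (⋃ i, D i) = Set.univ)
    (hFimono : ∀ i, Monotone (Fi i)) (hFiF : ∀ i t, Fi i t ≤ F)
    (hFirc : ∀ i (t : ℝ≥0) (A : Set Ω),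
      (∀ s : ℝ≥0, t < s → MeasurableSet[Fi i s] A) → MeasurableSet[Fi i t] A) :
    ∀ (t : ℝ≥0) (A : Set Ω),
      dirSumMem F Fi D t A ↔ ∀ s : ℝ≥0, t < s → dirSumMem F Fi D s A := by
  intro t A
  constructor
  · rintro ⟨hAF, hAi⟩ s hs
    refine ⟨hAF, fun i => ?_⟩
    obtain ⟨Ai, hm, he⟩ := hAi i
    exact ⟨Ai, hFimono i hs.le _ hm, he⟩
  · intro h
    refine ⟨(h (t + 1) (lt_add_of_pos_right t one_pos)).1, fun i => ?_⟩
    set u : ℕ → ℝ≥0 := fun n => t + ((n : ℝ≥0) + 1)⁻¹ with hu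
    have hut : ∀ n, t < u n := fun n => lt_add_of_pos_right t (by positivity)
    have huanti : ∀ p q : ℕ, p ≤ q → u q ≤ u p := by
      intro p q hpq
      refine add_le_add_right ?_ t
      have : (p : ℝ≥0) ≤ (q : ℝ≥0) := by exact_mod_cast hpq
      gcongr
    have hch : ∀ n, ∃ Ai, MeasurableSet[Fi i (u n)] Ai ∧ A ∩ D i = Ai ∩ D i :=
      fun n => (h (u n) (hut n)).2 i
    choose B hBm hBe using hch
    have hInter : ∀ p : ℕ, MeasurableSet[Fi i (u p)] (⋂ m, B (m + p)) := by
      intro p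
      refine MeasurableSet.iInter fun m => ?_
      exact hFimono i (huanti p (m + p) (Nat.le_add_left p m)) _ (hBm (m + p))
    have hmono : Monotone fun n => ⋂ m, B (m + n) := by
      intro a b hab x hx
      simp only [Set.mem_iInter] at hx ⊢
      intro m
      have := hx (m + (b - a))
      rwa [add_assoc, Nat.sub_add_cancel hab] at this
    refine ⟨⋃ n, ⋂ m, B (m + n), ?_, ?_⟩
    · apply hFirc
      intro s hs
      obtain ⟨N, hN⟩ := exists_nat_one_div_lt (tsub_pos_of_lt hs)
      have huN : u N ≤ s := by
        have h1 : ((N : ℝ≥0) + 1)⁻¹ ≤ s - t := by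
          rw [one_div] at hN; exact hN.le
        calc u N ≤ t + (s - t) := add_le_add_right h1 t
          _ = s := add_tsub_cancel_of_le hs.le
      have htail : (⋃ n, ⋂ m, B (m + n)) = ⋃ n, ⋂ m, B (m + (n + N)) := by
        apply le_antisymm
        · exact Set.iUnion_mono' fun n => ⟨n, hmono (Nat.le_add_right n N)⟩
        · exact Set.iUnion_mono' fun n => ⟨n + N, le_rfl⟩
      rw [htail]
      refine MeasurableSet.iUnion fun n => ?_
      exact hFimono i (le_trans (huanti N (n + N) (Nat.le_add_left N n)) huN) _
        (hInter (n + N))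
    · ext x
      simp only [Set.mem_inter_iff, Set.mem_iUnion, Set.mem_iInter]
      constructor
      · rintro ⟨hxA, hxD⟩
        refine ⟨⟨0, fun m => ?_⟩, hxD⟩
        have : x ∈ A ∩ D i := ⟨hxA, hxD⟩
        rw [hBe (m + 0)] at this
        exact this.1
      · rintro ⟨⟨n, hn⟩, hxD⟩
        have : x ∈ B n ∩ D i := ⟨by simpa using hn 0, hxD⟩
        rw [← hBe n] at this
        exact ⟨this.1, hxD⟩
end

section
/- Let ν be a probability measure on ℝ_+^n with density a with respect to μ^{⊗n}, μ non-atomic σ-finite, and let r be the increasing re-ordering map. Then for every bounded Borel g on ℝ_+^n, a version of the conditional expectation of g under ν given r is E^ν[g | r = x] = (ḡa(x) / ā(x))·1_{ā(x)>0}, where ḡa(x) = Σ_{π ∈ S_n} (g a)(π(x)) and ā(x) = Σ_{π ∈ S_n} a(π(x)). That is, for every bounded Borel h, ∫ g(x) h(r(x)) ν(dx) = ∫ (ḡa(r(x)) / ā(r(x))) 1_{ā(r(x))>0} h(r(x)) ν(dx). -/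
open MeasureTheory
open scoped ENNReal

/-- The increasing re-ordering of the coordinates of a vector. -/
noncomputable def sortVec {n : ℕ} (x : Fin n → ℝ) : Fin n → ℝ := x ∘ Tuple.sort x

lemma sortVec_comp_perm {n : ℕ} (x : Fin n → ℝ) (σ : Equiv.Perm (Fin n)) :
    sortVec (x ∘ σ) = sortVec x :=
  Tuple.comp_perm_comp_sort_eq_comp_sort

lemma measurable_comp_perm {n : ℕ} (σ : Equiv.Perm (Fin n)) :
    Measurable (fun x : Fin n → ℝ => x ∘ σ) :=
  measurable_pi_lambda _ fun i => measurable_pi_apply (σ i)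

lemma measurable_sortVec {n : ℕ} : Measurable (sortVec (n := n)) := by
  intro s hs
  have key : sortVec ⁻¹' s =
      ⋃ σ : Equiv.Perm (Fin n),
        ({x : Fin n → ℝ | Monotone (x ∘ σ)} ∩ (fun x : Fin n → ℝ => x ∘ σ) ⁻¹' s) := by
    ext x
    simp only [Set.mem_iUnion, Set.mem_inter_iff, Set.mem_setOf_eq, Set.mem_preimage]
    constructor
    · intro hx
      exact ⟨Tuple.sort x, Tuple.monotone_sort x, hx⟩
    · rintro ⟨σ, hmono, hxs⟩
      have heq : x ∘ σ = sortVec x :=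
        (Tuple.comp_sort_eq_comp_iff_monotone (f := x) (σ := σ)).mpr hmono
      rwa [heq] at hxs
  rw [key]
  refine MeasurableSet.iUnion fun σ => MeasurableSet.inter ?_ ((measurable_comp_perm σ) hs)
  have : {x : Fin n → ℝ | Monotone (x ∘ σ)} =
      ⋂ (i : Fin n) (j : Fin n) (_ : i ≤ j), {x : Fin n → ℝ | x (σ i) ≤ x (σ j)} := by
    ext x
    simp only [Set.mem_setOf_eq, Set.mem_iInter, Monotone, Function.comp_apply]
  rw [this]
  exact MeasurableSet.iInter fun i => MeasurableSet.iInter fun j =>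
    MeasurableSet.iInter fun _ =>
      measurableSet_le (measurable_pi_apply (σ i)) (measurable_pi_apply (σ j))

lemma measurePreserving_comp_perm {n : ℕ} (μ : Measure ℝ) [SigmaFinite μ]
    (σ : Equiv.Perm (Fin n)) :
    MeasurePreserving (fun x : Fin n → ℝ => x ∘ σ)
      (Measure.pi fun _ => μ) (Measure.pi fun _ => μ) := by
  have h := measurePreserving_piCongrLeft (fun _ : Fin n => μ) σ.symm
  have heq : ⇑(MeasurableEquiv.piCongrLeft (fun _ : Fin n => ℝ) σ.symm) =
      fun x : Fin n → ℝ => x ∘ σ := by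
    funext x
    funext j
    have := MeasurableEquiv.piCongrLeft_apply_apply σ.symm (β := fun _ => ℝ) x (σ j)
    simpa using this
  rwa [heq] at h

lemma sum_comp_perm_sortVec {n : ℕ} (b : (Fin n → ℝ) → ℝ≥0∞) (x : Fin n → ℝ) :
    ∑ π : Equiv.Perm (Fin n), b (sortVec x ∘ π) = ∑ π : Equiv.Perm (Fin n), b (x ∘ π) := by
  refine Fintype.sum_equiv (Equiv.mulLeft (Tuple.sort x)) _ _ fun π => ?_
  congr 1

theorem stmt17 {n : ℕ} (μ : Measure ℝ) [SigmaFinite μ] [NullSingletonClass μ]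
    (a : (Fin n → ℝ) → ℝ≥0∞) (ha : Measurable a)
    (hprob : ∫⁻ x, a x ∂Measure.pi (fun _ : Fin n => μ) = 1)
    (g : (Fin n → ℝ) → ℝ≥0∞) (hg : Measurable g)
    (C : ℝ≥0∞) (hC : C ≠ ⊤) (hgC : ∀ x, g x ≤ C)
    (h : (Fin n → ℝ) → ℝ≥0∞) (hh : Measurable h) :
    ∫⁻ x, g x * h (sortVec x) ∂((Measure.pi (fun _ : Fin n => μ)).withDensity a) =
      ∫⁻ x, (if 0 < ∑ π : Equiv.Perm (Fin n), a (sortVec x ∘ π)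
            then (∑ π : Equiv.Perm (Fin n), g (sortVec x ∘ π) * a (sortVec x ∘ π)) /
              (∑ π : Equiv.Perm (Fin n), a (sortVec x ∘ π))
            else 0) * h (sortVec x)
        ∂((Measure.pi (fun _ : Fin n => μ)).withDensity a) := by
  set P := Measure.pi (fun _ : Fin n => μ) with hP
  set abar : (Fin n → ℝ) → ℝ≥0∞ := fun y => ∑ π : Equiv.Perm (Fin n), a (y ∘ π) with habar
  set gabar : (Fin n → ℝ) → ℝ≥0∞ :=
    fun y => ∑ π : Equiv.Perm (Fin n), g (y ∘ π) * a (y ∘ π) with hgabar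
  set F : (Fin n → ℝ) → ℝ≥0∞ := fun y => if 0 < abar y then gabar y / abar y else 0 with hF
  -- measurability facts
  have habar_meas : Measurable abar :=
    Finset.measurable_sum _ fun π _ => ha.comp (measurable_comp_perm π)
  have hgabar_meas : Measurable gabar :=
    Finset.measurable_sum _ fun π _ =>
      (hg.comp (measurable_comp_perm π)).mul (ha.comp (measurable_comp_perm π))
  have hF_meas : Measurable F := by
    refine Measurable.ite ?_ (hgabar_meas.div habar_meas) measurable_const
    exact measurableSet_lt measurable_const habar_meas
  -- the statement's ite equals F ∘ sortVec composed
  have hite : ∀ x : Fin n → ℝ,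
      (if 0 < ∑ π : Equiv.Perm (Fin n), a (sortVec x ∘ π)
            then (∑ π : Equiv.Perm (Fin n), g (sortVec x ∘ π) * a (sortVec x ∘ π)) /
              (∑ π : Equiv.Perm (Fin n), a (sortVec x ∘ π))
            else 0) = F (sortVec x) := fun x => rfl
  simp only [hite]
  -- rewrite withDensity integrals
  rw [lintegral_withDensity_eq_lintegral_mul P ha
      (show Measurable fun x => g x * h (sortVec x) from
        hg.mul (hh.comp measurable_sortVec)),
    lintegral_withDensity_eq_lintegral_mul P ha
      (show Measurable fun x => F (sortVec x) * h (sortVec x) from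
        (hF_meas.comp measurable_sortVec).mul (hh.comp measurable_sortVec))]
  simp only [Pi.mul_apply]
  -- change of variables lemma
  have hchg : ∀ (φ : (Fin n → ℝ) → ℝ≥0∞), Measurable φ →
      ∀ σ : Equiv.Perm (Fin n), ∫⁻ x, φ (x ∘ σ) ∂P = ∫⁻ x, φ x ∂P := fun φ hφ σ =>
    (measurePreserving_comp_perm μ σ).lintegral_comp hφ
  set c : ℝ≥0∞ := (Fintype.card (Equiv.Perm (Fin n)) : ℝ≥0∞) with hc
  have hc0 : c ≠ 0 := by
    simp [hc, Fintype.card_ne_zero]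
  have hctop : c ≠ ⊤ := by simp [hc]
  -- left side times c
  have hL : c * (∫⁻ x, a x * (g x * h (sortVec x)) ∂P) =
      ∫⁻ x, gabar x * h (sortVec x) ∂P := by
    have : ∀ σ : Equiv.Perm (Fin n),
        (∫⁻ x, a x * (g x * h (sortVec x)) ∂P) =
          ∫⁻ x, a (x ∘ σ) * (g (x ∘ σ) * h (sortVec x)) ∂P := by
      intro σ
      rw [← hchg (fun x => a x * (g x * h (sortVec x)))
        (ha.mul (hg.mul (hh.comp measurable_sortVec))) σ]
      simp only [sortVec_comp_perm]
    calc c * (∫⁻ x, a x * (g x * h (sortVec x)) ∂P)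
        = ∑ σ : Equiv.Perm (Fin n), ∫⁻ x, a (x ∘ σ) * (g (x ∘ σ) * h (sortVec x)) ∂P := by
          rw [Finset.sum_congr rfl (fun σ _ => (this σ).symm), Finset.sum_const]
          simp [hc, nsmul_eq_mul, mul_comm]
      _ = ∫⁻ x, ∑ σ : Equiv.Perm (Fin n), a (x ∘ σ) * (g (x ∘ σ) * h (sortVec x)) ∂P := by
          rw [← lintegral_finset_sum]
          intro σ _
          exact (ha.comp (measurable_comp_perm σ)).mul
            ((hg.comp (measurable_comp_perm σ)).mul (hh.comp measurable_sortVec))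
      _ = ∫⁻ x, gabar x * h (sortVec x) ∂P := by
          congr 1
          funext x
          rw [hgabar, Finset.sum_mul]
          exact Finset.sum_congr rfl fun σ _ => by ring
  -- right side times c
  have hR : c * (∫⁻ x, a x * (F (sortVec x) * h (sortVec x)) ∂P) =
      ∫⁻ x, abar x * (F (sortVec x) * h (sortVec x)) ∂P := by
    have : ∀ σ : Equiv.Perm (Fin n),
        (∫⁻ x, a x * (F (sortVec x) * h (sortVec x)) ∂P) =
          ∫⁻ x, a (x ∘ σ) * (F (sortVec x) * h (sortVec x)) ∂P := by
      intro σ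
      rw [← hchg (fun x => a x * (F (sortVec x) * h (sortVec x)))
        (ha.mul ((hF_meas.comp measurable_sortVec).mul (hh.comp measurable_sortVec))) σ]
      simp only [sortVec_comp_perm]
    calc c * (∫⁻ x, a x * (F (sortVec x) * h (sortVec x)) ∂P)
        = ∑ σ : Equiv.Perm (Fin n),
            ∫⁻ x, a (x ∘ σ) * (F (sortVec x) * h (sortVec x)) ∂P := by
          rw [Finset.sum_congr rfl (fun σ _ => (this σ).symm), Finset.sum_const]
          simp [hc, nsmul_eq_mul, mul_comm]
      _ = ∫⁻ x, ∑ σ : Equiv.Perm (Fin n),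
            a (x ∘ σ) * (F (sortVec x) * h (sortVec x)) ∂P := by
          rw [← lintegral_finset_sum]
          intro σ _
          exact (ha.comp (measurable_comp_perm σ)).mul
            ((hF_meas.comp measurable_sortVec).mul (hh.comp measurable_sortVec))
      _ = ∫⁻ x, abar x * (F (sortVec x) * h (sortVec x)) ∂P := by
          congr 1
          funext x
          rw [habar, ← Finset.sum_mul]
  -- abar is a.e. finite
  have hfin : ∀ᵐ x ∂P, abar x < ⊤ := by
    have hae : ∀ σ : Equiv.Perm (Fin n), ∀ᵐ x ∂P, a (x ∘ σ) < ⊤ := by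
      intro σ
      refine ae_lt_top (ha.comp (measurable_comp_perm σ)) ?_
      rw [hchg a ha σ, hprob]
      exact ENNReal.one_ne_top
    have := (ae_all_iff (ι := Equiv.Perm (Fin n))).mpr hae
    filter_upwards [this] with x hx
    rw [habar]
    exact ENNReal.sum_lt_top.mpr fun σ _ => hx σ
  -- pointwise a.e. identity
  have hpt : ∀ᵐ x ∂P, abar x * (F (sortVec x) * h (sortVec x)) = gabar x * h (sortVec x) := by
    filter_upwards [hfin] with x hx
    have hFsort : F (sortVec x) = if 0 < abar x then gabar x / abar x else 0 := by
      have h1 : abar (sortVec x) = abar x := sum_comp_perm_sortVec a x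
      have h2 : gabar (sortVec x) = gabar x := sum_comp_perm_sortVec (fun y => g y * a y) x
      simp only [hF, h1, h2]
    rw [hFsort]
    by_cases h0 : 0 < abar x
    · rw [if_pos h0, ← mul_assoc, ENNReal.mul_div_cancel h0.ne' hx.ne]
    · rw [if_neg h0]
      have habar0 : abar x = 0 := by
        simpa using h0
      have : ∀ σ : Equiv.Perm (Fin n), a (x ∘ σ) = 0 := by
        intro σ
        have := (Finset.sum_eq_zero_iff.mp habar0) σ (Finset.mem_univ σ)
        exact this
      have hg0 : gabar x = 0 := by
        rw [hgabar]
        exact Finset.sum_eq_zero fun σ _ => by rw [this σ, mul_zero]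
      rw [habar0, hg0, zero_mul, zero_mul]
  -- combine
  have hkey : c * (∫⁻ x, a x * (g x * h (sortVec x)) ∂P) =
      c * (∫⁻ x, a x * (F (sortVec x) * h (sortVec x)) ∂P) := by
    rw [hL, hR, lintegral_congr_ae hpt]
  have := congrArg (fun t => c⁻¹ * t) hkey
  simpa [← mul_assoc, ENNReal.inv_mul_cancel hc0 hctop, one_mul] using this
end
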